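/- Under the setting of the telescoping lemma, suppose additionally that for every policy π the value V_c^{p,π} : S → ℝ is L_C-Lipschitz with respect to a metric d on S. Then for any transition kernel q, |C_q(π) − C_p(π)| ≤ (γ · L_C/(1−γ)) · E_{(s,a)∼d_{q,π}}[ D_W(q(·|s,a), p(·|s,a)) ], where D_W is the L1-Wasserstein distance with ground metric d. -/

import Mathlib

open Finset

/-- State distribution at time `t` under kernel `p`, policy `π`, initial
distribution `ρ`. -/
def stDist {S A : Type} [Fintype S] [Fintype A]
    (p : S → A → S → ℝ) (π : S → A → ℝ) (ρ : S → ℝ) : ℕ → S → ℝ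
  | 0 => ρ
  | t + 1 => fun s' => ∑ s, ∑ a, stDist p π ρ t s * π s a * p s a s'

/-- Discounted value function for cost `c`, starting from state `s`. -/
noncomputable def Vval {S A : Type} [Fintype S] [Fintype A] [DecidableEq S]
    (γ : ℝ) (p : S → A → S → ℝ) (π : S → A → ℝ) (c : S → A → ℝ) (s : S) : ℝ :=
  ∑' t : ℕ, γ ^ t *
    ∑ s', stDist p π (fun x => if x = s then (1 : ℝ) else 0) t s' *
      ∑ a, π s' a * c s' a

/-- Expected discounted cumulative cost from initial distribution `ρ`. -/
noncomputable def Cval {S A : Type} [Fintype S] [Fintype A] [DecidableEq S]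
    (γ : ℝ) (p : S → A → S → ℝ) (π : S → A → ℝ) (c : S → A → ℝ) (ρ : S → ℝ) : ℝ :=
  ∑ s, ρ s * Vval γ p π c s

/-- Normalized discounted state-action occupancy measure. -/
noncomputable def occ {S A : Type} [Fintype S] [Fintype A]
    (γ : ℝ) (p : S → A → S → ℝ) (π : S → A → ℝ) (ρ : S → ℝ) (s : S) (a : A) : ℝ :=
  (1 - γ) * π s a * ∑' t : ℕ, γ ^ t * stDist p π ρ t s

/-- L1-Wasserstein distance between pmfs on a finite space, with ground
distance `d`. -/
noncomputable def DW {S : Type} [Fintype S] (d : S → S → ℝ) (μ ν : S → ℝ) : ℝ :=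
  sInf {w : ℝ | ∃ κ : S → S → ℝ, (∀ x y, 0 ≤ κ x y) ∧
    (∀ x, ∑ y, κ x y = μ x) ∧ (∀ y, ∑ x, κ x y = ν y) ∧
    w = ∑ x, ∑ y, κ x y * d x y}



section
open Finset
variable {S A : Type} [Fintype S] [Fintype A]

lemma comm3 {X Y Z : Type} [Fintype X] [Fintype Y] [Fintype Z] (f : X → Y → Z → ℝ) :
    ∑ x, ∑ y, ∑ z, f x y z = ∑ z, ∑ x, ∑ y, f x y z := by
  rw [show (∑ x, ∑ y, ∑ z, f x y z) = ∑ x, ∑ z, ∑ y, f x y z from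
    Finset.sum_congr rfl fun x _ => Finset.sum_comm, Finset.sum_comm]

variable {S A : Type} [Fintype S] [Fintype A]

lemma stDist_nonneg (p : S → A → S → ℝ) (π : S → A → ℝ) (ρ : S → ℝ)
    (hp0 : ∀ s a s', 0 ≤ p s a s') (hπ0 : ∀ s a, 0 ≤ π s a) (hρ0 : ∀ s, 0 ≤ ρ s) :
    ∀ t s, 0 ≤ stDist p π ρ t s := by
  intro t
  induction t with
  | zero => exact hρ0
  | succ t ih =>
    intro s'
    refine Finset.sum_nonneg fun s _ => Finset.sum_nonneg fun a _ => ?_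
    exact mul_nonneg (mul_nonneg (ih s) (hπ0 s a)) (hp0 s a s')

lemma stDist_sum_one (p : S → A → S → ℝ) (π : S → A → ℝ) (ρ : S → ℝ)
    (hp1 : ∀ s a, ∑ s', p s a s' = 1) (hπ1 : ∀ s, ∑ a, π s a = 1)
    (hρ1 : ∑ s, ρ s = 1) :
    ∀ t, ∑ s, stDist p π ρ t s = 1 := by
  intro t
  induction t with
  | zero => exact hρ1
  | succ t ih =>
    show ∑ s', ∑ s, ∑ a, stDist p π ρ t s * π s a * p s a s' = 1
    rw [Finset.sum_comm]
    calc ∑ s, ∑ s', ∑ a, stDist p π ρ t s * π s a * p s a s'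
        = ∑ s, stDist p π ρ t s := by
          refine Finset.sum_congr rfl fun s _ => ?_
          rw [Finset.sum_comm]
          calc ∑ a, ∑ s', stDist p π ρ t s * π s a * p s a s'
              = ∑ a, stDist p π ρ t s * π s a := by
                refine Finset.sum_congr rfl fun a _ => ?_
                rw [← Finset.mul_sum, hp1, mul_one]
            _ = stDist p π ρ t s := by rw [← Finset.mul_sum, hπ1, mul_one]
      _ = 1 := ih

lemma stDist_markov [DecidableEq S] (p : S → A → S → ℝ) (π : S → A → ℝ) (s : S) :
    ∀ t s', stDist p π (fun x => if x = s then (1:ℝ) else 0) (t+1) s' =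
      ∑ s1, (∑ a, π s a * p s a s1) *
        stDist p π (fun x => if x = s1 then (1:ℝ) else 0) t s' := by
  intro t
  induction t with
  | zero =>
    intro s'
    show ∑ s0, ∑ a, (if s0 = s then (1:ℝ) else 0) * π s0 a * p s0 a s' = _
    simp only [show ∀ s1:S, stDist p π (fun x => if x = s1 then (1:ℝ) else 0) 0 s' =
      if s' = s1 then (1:ℝ) else 0 from fun _ => rfl]
    simp [ite_mul, mul_ite, Finset.sum_ite_eq, Finset.sum_ite_eq']
  | succ t ih =>
    intro s'
    show ∑ s0, ∑ a, stDist p π _ (t+1) s0 * π s0 a * p s0 a s' = _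
    calc ∑ s0, ∑ a, stDist p π (fun x => if x = s then (1:ℝ) else 0) (t+1) s0 * π s0 a * p s0 a s'
        = ∑ s0, ∑ a, ∑ s1, (∑ a', π s a' * p s a' s1) *
            (stDist p π (fun x => if x = s1 then (1:ℝ) else 0) t s0 * (π s0 a * p s0 a s')) := by
          refine Finset.sum_congr rfl fun s0 _ => Finset.sum_congr rfl fun a _ => ?_
          rw [ih s0]
          simp only [Finset.sum_mul, mul_assoc]
      _ = ∑ s1, ∑ s0, ∑ a, (∑ a', π s a' * p s a' s1) *
            (stDist p π (fun x => if x = s1 then (1:ℝ) else 0) t s0 * (π s0 a * p s0 a s')) :=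
          comm3 _
      _ = _ := by
          refine Finset.sum_congr rfl fun s1 _ => ?_
          show _ = _ * ∑ s0, ∑ a, stDist p π (fun x => if x = s1 then (1:ℝ) else 0) t s0 * π s0 a * p s0 a s'
          simp only [← Finset.mul_sum, mul_assoc]

lemma stDist_linear [DecidableEq S] (p : S → A → S → ℝ) (π : S → A → ℝ) (ρ : S → ℝ) :
    ∀ t s', stDist p π ρ t s' =
      ∑ s, ρ s * stDist p π (fun x => if x = s then (1:ℝ) else 0) t s' := by
  intro t
  induction t with
  | zero =>
    intro s'
    show ρ s' = ∑ s, ρ s * (if s' = s then (1:ℝ) else 0)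
    simp [mul_ite, Finset.sum_ite_eq]
  | succ t ih =>
    intro s'
    show ∑ s0, ∑ a, stDist p π ρ t s0 * π s0 a * p s0 a s' = _
    calc ∑ s0, ∑ a, stDist p π ρ t s0 * π s0 a * p s0 a s'
        = ∑ s0, ∑ a, ∑ s1, ρ s1 *
            (stDist p π (fun x => if x = s1 then (1:ℝ) else 0) t s0 * (π s0 a * p s0 a s')) := by
          refine Finset.sum_congr rfl fun s0 _ => Finset.sum_congr rfl fun a _ => ?_
          rw [ih s0]
          simp only [Finset.sum_mul, mul_assoc]
      _ = ∑ s1, ∑ s0, ∑ a, ρ s1 *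
            (stDist p π (fun x => if x = s1 then (1:ℝ) else 0) t s0 * (π s0 a * p s0 a s')) :=
          comm3 _
      _ = _ := by
          refine Finset.sum_congr rfl fun s1 _ => ?_
          show _ = _ * ∑ s0, ∑ a, stDist p π (fun x => if x = s1 then (1:ℝ) else 0) t s0 * π s0 a * p s0 a s'
          simp only [← Finset.mul_sum, mul_assoc]

end

section
open Finset
variable {S A : Type} [Fintype S] [Fintype A] [DecidableEq S]

lemma summable_geom_bound {γ B : ℝ} (hγ0 : 0 ≤ γ) (hγ1 : γ < 1) (u : ℕ → ℝ)
    (hu : ∀ t, |u t| ≤ B) : Summable (fun t => γ ^ t * u t) := by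
  refine Summable.of_norm_bounded (g := fun t => B * γ ^ t)
    ((summable_geometric_of_lt_one hγ0 hγ1).mul_left B) fun t => ?_
  rw [Real.norm_eq_abs, abs_mul, abs_pow, abs_of_nonneg hγ0, mul_comm]
  exact mul_le_mul_of_nonneg_right (hu t) (pow_nonneg hγ0 t)

lemma r_nonneg {π c : S → A → ℝ} (hπ0 : ∀ s a, 0 ≤ π s a) (hc0 : ∀ s a, 0 ≤ c s a) :
    ∀ s, 0 ≤ ∑ a, π s a * c s a := fun s =>
  Finset.sum_nonneg fun a _ => mul_nonneg (hπ0 s a) (hc0 s a)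

lemma r_le {π c : S → A → ℝ} {cmax : ℝ} (hπ0 : ∀ s a, 0 ≤ π s a)
    (hπ1 : ∀ s, ∑ a, π s a = 1) (hc1 : ∀ s a, c s a ≤ cmax) :
    ∀ s, ∑ a, π s a * c s a ≤ cmax := fun s => by
  calc ∑ a, π s a * c s a ≤ ∑ a, π s a * cmax :=
        Finset.sum_le_sum fun a _ => mul_le_mul_of_nonneg_left (hc1 s a) (hπ0 s a)
    _ = cmax := by rw [← Finset.sum_mul, hπ1, one_mul]

lemma g_bounds {γ : ℝ} (p : S → A → S → ℝ) (π c : S → A → ℝ) {cmax : ℝ}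
    (hp0 : ∀ s a s', 0 ≤ p s a s') (hp1 : ∀ s a, ∑ s', p s a s' = 1)
    (hπ0 : ∀ s a, 0 ≤ π s a) (hπ1 : ∀ s, ∑ a, π s a = 1)
    (hc0 : ∀ s a, 0 ≤ c s a) (hc1 : ∀ s a, c s a ≤ cmax)
    (ρ : S → ℝ) (hρ0 : ∀ s, 0 ≤ ρ s) (hρ1 : ∑ s, ρ s = 1) (t : ℕ) :
    0 ≤ ∑ s', stDist p π ρ t s' * ∑ a, π s' a * c s' a ∧
    ∑ s', stDist p π ρ t s' * ∑ a, π s' a * c s' a ≤ cmax := by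
  constructor
  · exact Finset.sum_nonneg fun s' _ => mul_nonneg
      (stDist_nonneg p π ρ hp0 hπ0 hρ0 t s') (r_nonneg hπ0 hc0 s')
  · calc ∑ s', stDist p π ρ t s' * ∑ a, π s' a * c s' a
        ≤ ∑ s', stDist p π ρ t s' * cmax :=
          Finset.sum_le_sum fun s' _ => mul_le_mul_of_nonneg_left
            (r_le hπ0 hπ1 hc1 s') (stDist_nonneg p π ρ hp0 hπ0 hρ0 t s')
      _ = cmax := by rw [← Finset.sum_mul, stDist_sum_one p π ρ hp1 hπ1 hρ1, one_mul]

lemma summable_g {γ : ℝ} (p : S → A → S → ℝ) (π c : S → A → ℝ) {cmax : ℝ}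
    (hγ0 : 0 ≤ γ) (hγ1 : γ < 1)
    (hp0 : ∀ s a s', 0 ≤ p s a s') (hp1 : ∀ s a, ∑ s', p s a s' = 1)
    (hπ0 : ∀ s a, 0 ≤ π s a) (hπ1 : ∀ s, ∑ a, π s a = 1)
    (hc0 : ∀ s a, 0 ≤ c s a) (hc1 : ∀ s a, c s a ≤ cmax)
    (ρ : S → ℝ) (hρ0 : ∀ s, 0 ≤ ρ s) (hρ1 : ∑ s, ρ s = 1) :
    Summable (fun t => γ ^ t * ∑ s', stDist p π ρ t s' * ∑ a, π s' a * c s' a) := by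
  refine summable_geom_bound (B := cmax) hγ0 hγ1 _ (fun t => ?_)
  have h := g_bounds (γ := γ) p π c hp0 hp1 hπ0 hπ1 hc0 hc1 ρ hρ0 hρ1 t
  rw [abs_of_nonneg h.1]; exact h.2

lemma delta_nonneg (s : S) : ∀ x, (0:ℝ) ≤ if x = s then (1:ℝ) else 0 := fun x => by
  split <;> norm_num

lemma delta_sum (s : S) : ∑ x, (if x = s then (1:ℝ) else 0) = 1 := by
  simp [Finset.sum_ite_eq']

variable {γ : ℝ} (p : S → A → S → ℝ) (π c : S → A → ℝ) {cmax : ℝ}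

lemma summable_V
    (hγ0 : 0 ≤ γ) (hγ1 : γ < 1)
    (hp0 : ∀ s a s', 0 ≤ p s a s') (hp1 : ∀ s a, ∑ s', p s a s' = 1)
    (hπ0 : ∀ s a, 0 ≤ π s a) (hπ1 : ∀ s, ∑ a, π s a = 1)
    (hc0 : ∀ s a, 0 ≤ c s a) (hc1 : ∀ s a, c s a ≤ cmax) (s : S) :
    Summable (fun t => γ ^ t *
      ∑ s', stDist p π (fun x => if x = s then (1:ℝ) else 0) t s' * ∑ a, π s' a * c s' a) :=
  summable_g p π c hγ0 hγ1 hp0 hp1 hπ0 hπ1 hc0 hc1 _ (delta_nonneg s) (delta_sum s)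

lemma Vval_nonneg
    (hγ0 : 0 ≤ γ)
    (hp0 : ∀ s a s', 0 ≤ p s a s') (hp1 : ∀ s a, ∑ s', p s a s' = 1)
    (hπ0 : ∀ s a, 0 ≤ π s a) (hπ1 : ∀ s, ∑ a, π s a = 1)
    (hc0 : ∀ s a, 0 ≤ c s a) (hc1 : ∀ s a, c s a ≤ cmax) (s : S) :
    0 ≤ Vval γ p π c s :=
  tsum_nonneg fun t => mul_nonneg (pow_nonneg hγ0 t)
    (g_bounds (γ := γ) p π c hp0 hp1 hπ0 hπ1 hc0 hc1 _ (delta_nonneg s) (delta_sum s) t).1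

lemma Vval_le
    (hγ0 : 0 ≤ γ) (hγ1 : γ < 1)
    (hp0 : ∀ s a s', 0 ≤ p s a s') (hp1 : ∀ s a, ∑ s', p s a s' = 1)
    (hπ0 : ∀ s a, 0 ≤ π s a) (hπ1 : ∀ s, ∑ a, π s a = 1)
    (hc0 : ∀ s a, 0 ≤ c s a) (hc1 : ∀ s a, c s a ≤ cmax) (s : S) :
    Vval γ p π c s ≤ cmax * (1 - γ)⁻¹ := by
  have h1 : Vval γ p π c s ≤ ∑' t : ℕ, cmax * γ ^ t := by
    refine Summable.tsum_le_tsum (fun t => ?_)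
      (summable_V p π c hγ0 hγ1 hp0 hp1 hπ0 hπ1 hc0 hc1 s)
      ((summable_geometric_of_lt_one hγ0 hγ1).mul_left cmax)
    rw [mul_comm cmax]
    exact mul_le_mul_of_nonneg_left
      (g_bounds (γ := γ) p π c hp0 hp1 hπ0 hπ1 hc0 hc1 _ (delta_nonneg s) (delta_sum s) t).2
      (pow_nonneg hγ0 t)
  rwa [tsum_mul_left, tsum_geometric_of_lt_one hγ0 hγ1] at h1

lemma Vval_abs_le
    (hγ0 : 0 ≤ γ) (hγ1 : γ < 1)
    (hp0 : ∀ s a s', 0 ≤ p s a s') (hp1 : ∀ s a, ∑ s', p s a s' = 1)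
    (hπ0 : ∀ s a, 0 ≤ π s a) (hπ1 : ∀ s, ∑ a, π s a = 1)
    (hc0 : ∀ s a, 0 ≤ c s a) (hc1 : ∀ s a, c s a ≤ cmax) (s : S) :
    |Vval γ p π c s| ≤ cmax * (1 - γ)⁻¹ := by
  rw [abs_of_nonneg (Vval_nonneg p π c hγ0 hp0 hp1 hπ0 hπ1 hc0 hc1 s)]
  exact Vval_le p π c hγ0 hγ1 hp0 hp1 hπ0 hπ1 hc0 hc1 s

lemma Vval_bellman
    (hγ0 : 0 ≤ γ) (hγ1 : γ < 1)
    (hp0 : ∀ s a s', 0 ≤ p s a s') (hp1 : ∀ s a, ∑ s', p s a s' = 1)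
    (hπ0 : ∀ s a, 0 ≤ π s a) (hπ1 : ∀ s, ∑ a, π s a = 1)
    (hc0 : ∀ s a, 0 ≤ c s a) (hc1 : ∀ s a, c s a ≤ cmax) (s : S) :
    Vval γ p π c s = (∑ a, π s a * c s a) +
      γ * ∑ s1, (∑ a, π s a * p s a s1) * Vval γ p π c s1 := by
  have hs := summable_V p π c hγ0 hγ1 hp0 hp1 hπ0 hπ1 hc0 hc1 s
  rw [Vval, Summable.tsum_eq_zero_add hs]
  congr 1
  · show γ ^ 0 * ∑ s', (if s' = s then (1:ℝ) else 0) * ∑ a, π s' a * c s' a = _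
    simp [ite_mul, Finset.sum_ite_eq']
  · have hshift : ∀ t : ℕ, γ ^ (t+1) *
        ∑ s', stDist p π (fun x => if x = s then (1:ℝ) else 0) (t+1) s' * ∑ a, π s' a * c s' a
        = γ * ∑ s1, (∑ a, π s a * p s a s1) *
          (γ ^ t * ∑ s', stDist p π (fun x => if x = s1 then (1:ℝ) else 0) t s' *
            ∑ a, π s' a * c s' a) := by
      intro t
      have key : ∑ s', stDist p π (fun x => if x = s then (1:ℝ) else 0) (t+1) s' * ∑ a, π s' a * c s' a
          = ∑ s1, (∑ a, π s a * p s a s1) *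
            ∑ s', stDist p π (fun x => if x = s1 then (1:ℝ) else 0) t s' * ∑ a, π s' a * c s' a := by
        calc ∑ s', stDist p π (fun x => if x = s then (1:ℝ) else 0) (t+1) s' * ∑ a, π s' a * c s' a
            = ∑ s', ∑ s1, (∑ a, π s a * p s a s1) *
                (stDist p π (fun x => if x = s1 then (1:ℝ) else 0) t s' * ∑ a, π s' a * c s' a) := by
              refine Finset.sum_congr rfl fun s' _ => ?_
              rw [stDist_markov p π s t s']
              simp only [Finset.sum_mul, mul_assoc]
          _ = _ := by rw [Finset.sum_comm]; simp only [← Finset.mul_sum]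
      rw [key, pow_succ, Finset.mul_sum, Finset.mul_sum]
      refine Finset.sum_congr rfl fun s1 _ => by ring
    calc ∑' t : ℕ, γ ^ (t+1) *
          ∑ s', stDist p π (fun x => if x = s then (1:ℝ) else 0) (t+1) s' * ∑ a, π s' a * c s' a
        = ∑' t : ℕ, γ * ∑ s1, (∑ a, π s a * p s a s1) *
            (γ ^ t * ∑ s', stDist p π (fun x => if x = s1 then (1:ℝ) else 0) t s' *
              ∑ a, π s' a * c s' a) := tsum_congr hshift
      _ = γ * ∑' t : ℕ, ∑ s1, (∑ a, π s a * p s a s1) *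
            (γ ^ t * ∑ s', stDist p π (fun x => if x = s1 then (1:ℝ) else 0) t s' *
              ∑ a, π s' a * c s' a) := tsum_mul_left
      _ = γ * ∑ s1, ∑' t : ℕ, (∑ a, π s a * p s a s1) *
            (γ ^ t * ∑ s', stDist p π (fun x => if x = s1 then (1:ℝ) else 0) t s' *
              ∑ a, π s' a * c s' a) := by
          congr 1
          exact Summable.tsum_finsetSum fun s1 _ =>
            (summable_V p π c hγ0 hγ1 hp0 hp1 hπ0 hπ1 hc0 hc1 s1).mul_left _
      _ = γ * ∑ s1, (∑ a, π s a * p s a s1) * Vval γ p π c s1 := by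
          congr 1
          exact Finset.sum_congr rfl fun s1 _ => tsum_mul_left

lemma Cval_eq_tsum
    (hγ0 : 0 ≤ γ) (hγ1 : γ < 1)
    (hp0 : ∀ s a s', 0 ≤ p s a s') (hp1 : ∀ s a, ∑ s', p s a s' = 1)
    (hπ0 : ∀ s a, 0 ≤ π s a) (hπ1 : ∀ s, ∑ a, π s a = 1)
    (hc0 : ∀ s a, 0 ≤ c s a) (hc1 : ∀ s a, c s a ≤ cmax)
    (ρ : S → ℝ) :
    ∑ s, ρ s * Vval γ p π c s =
      ∑' t : ℕ, γ ^ t * ∑ s', stDist p π ρ t s' * ∑ a, π s' a * c s' a := by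
  calc ∑ s, ρ s * Vval γ p π c s
      = ∑ s, ∑' t : ℕ, ρ s * (γ ^ t *
          ∑ s', stDist p π (fun x => if x = s then (1:ℝ) else 0) t s' * ∑ a, π s' a * c s' a) :=
        Finset.sum_congr rfl fun s _ => (tsum_mul_left).symm
    _ = ∑' t : ℕ, ∑ s, ρ s * (γ ^ t *
          ∑ s', stDist p π (fun x => if x = s then (1:ℝ) else 0) t s' * ∑ a, π s' a * c s' a) :=
        (Summable.tsum_finsetSum fun s _ =>
          (summable_V p π c hγ0 hγ1 hp0 hp1 hπ0 hπ1 hc0 hc1 s).mul_left _).symm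
    _ = _ := by
        refine tsum_congr fun t => ?_
        rw [Finset.mul_sum]
        calc ∑ s, ρ s * (γ ^ t *
              ∑ s', stDist p π (fun x => if x = s then (1:ℝ) else 0) t s' * ∑ a, π s' a * c s' a)
            = ∑ s, ∑ s', γ ^ t * (ρ s * stDist p π (fun x => if x = s then (1:ℝ) else 0) t s'
                * ∑ a, π s' a * c s' a) := by
              refine Finset.sum_congr rfl fun s _ => ?_
              rw [Finset.mul_sum, Finset.mul_sum]
              exact Finset.sum_congr rfl fun s' _ => by ring
          _ = ∑ s', γ ^ t * ((∑ s, ρ s * stDist p π (fun x => if x = s then (1:ℝ) else 0) t s')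
                * ∑ a, π s' a * c s' a) := by
              rw [Finset.sum_comm]
              refine Finset.sum_congr rfl fun s' _ => ?_
              rw [← Finset.mul_sum]
              congr 1
              rw [← Finset.sum_mul]
          _ = _ := by
              refine Finset.sum_congr rfl fun s' _ => ?_
              rw [← stDist_linear]
end

section
open Finset
variable {S A : Type} [Fintype S] [Fintype A]

lemma step_identity (p q : S → A → S → ℝ) (π : S → A → ℝ) (σ V r : S → ℝ) (γ : ℝ)
    (hV : ∀ s, V s = r s + γ * ∑ s1, (∑ a, π s a * p s a s1) * V s1) :
    ∑ s, σ s * V s - γ * ∑ s', (∑ s, ∑ a, σ s * π s a * q s a s') * V s'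
      = ∑ s, σ s * r s -
        γ * ∑ s, σ s * ∑ a, π s a * ∑ s', (q s a s' - p s a s') * V s' := by
  have inner : ∀ s, ∑ s1, (∑ a, π s a * p s a s1) * V s1
      = ∑ a, π s a * ∑ s', p s a s' * V s' := by
    intro s
    calc ∑ s1, (∑ a, π s a * p s a s1) * V s1
        = ∑ s1, ∑ a, π s a * (p s a s1 * V s1) := by
          refine Finset.sum_congr rfl fun s1 _ => ?_
          rw [Finset.sum_mul]
          exact Finset.sum_congr rfl fun a _ => by ring
      _ = ∑ a, ∑ s1, π s a * (p s a s1 * V s1) := Finset.sum_comm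
      _ = ∑ a, π s a * ∑ s', p s a s' * V s' :=
          Finset.sum_congr rfl fun a _ => by rw [← Finset.mul_sum]
  have e1 : ∑ s, σ s * V s = ∑ s, σ s * r s +
      γ * ∑ s, σ s * ∑ a, π s a * ∑ s', p s a s' * V s' := by
    calc ∑ s, σ s * V s
        = ∑ s, (σ s * r s + γ * (σ s * ∑ s1, (∑ a, π s a * p s a s1) * V s1)) := by
          refine Finset.sum_congr rfl fun s _ => ?_
          rw [hV s]; ring
      _ = ∑ s, σ s * r s + γ * ∑ s, σ s * ∑ s1, (∑ a, π s a * p s a s1) * V s1 := by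
          rw [Finset.sum_add_distrib, ← Finset.mul_sum]
      _ = _ := by
          congr 1
          congr 1
          exact Finset.sum_congr rfl fun s _ => by rw [inner s]
  have e2 : ∑ s', (∑ s, ∑ a, σ s * π s a * q s a s') * V s'
      = ∑ s, σ s * ∑ a, π s a * ∑ s', q s a s' * V s' := by
    calc ∑ s', (∑ s, ∑ a, σ s * π s a * q s a s') * V s'
        = ∑ s', ∑ s, ∑ a, σ s * (π s a * (q s a s' * V s')) := by
          refine Finset.sum_congr rfl fun s' _ => ?_
          simp only [Finset.sum_mul]
          exact Finset.sum_congr rfl fun s _ => Finset.sum_congr rfl fun a _ => by ring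
      _ = ∑ s, ∑ s', ∑ a, σ s * (π s a * (q s a s' * V s')) := Finset.sum_comm
      _ = ∑ s, ∑ a, ∑ s', σ s * (π s a * (q s a s' * V s')) :=
          Finset.sum_congr rfl fun s _ => Finset.sum_comm
      _ = _ := Finset.sum_congr rfl fun s _ => by simp only [← Finset.mul_sum]
  have e5 : ∑ s, σ s * ∑ a, π s a * ∑ s', q s a s' * V s'
      - ∑ s, σ s * ∑ a, π s a * ∑ s', p s a s' * V s'
      = ∑ s, σ s * ∑ a, π s a * ∑ s', (q s a s' - p s a s') * V s' := by
    rw [← Finset.sum_sub_distrib]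
    refine Finset.sum_congr rfl fun s _ => ?_
    rw [← mul_sub, ← Finset.sum_sub_distrib]
    congr 1
    refine Finset.sum_congr rfl fun a _ => ?_
    rw [← mul_sub, ← Finset.sum_sub_distrib]
    congr 1
    exact Finset.sum_congr rfl fun s' _ => by rw [sub_mul]
  rw [e1, e2]
  linear_combination (-γ) * e5
end

section
open Finset
variable {S A : Type} [Fintype S] [Fintype A] [DecidableEq S]

lemma abs_inner_le (p q : S → A → S → ℝ) (π : S → A → ℝ) (V : S → ℝ) (M : ℝ)
    (hp0 : ∀ s a s', 0 ≤ p s a s') (hp1 : ∀ s a, ∑ s', p s a s' = 1)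
    (hq0 : ∀ s a s', 0 ≤ q s a s') (hq1 : ∀ s a, ∑ s', q s a s' = 1)
    (hπ0 : ∀ s a, 0 ≤ π s a) (hπ1 : ∀ s, ∑ a, π s a = 1)
    (hV : ∀ s, |V s| ≤ M) (s : S) :
    |∑ a, π s a * ∑ s', (q s a s' - p s a s') * V s'| ≤ 2 * M := by
  have hd : ∀ a, |∑ s', (q s a s' - p s a s') * V s'| ≤ 2 * M := by
    intro a
    calc |∑ s', (q s a s' - p s a s') * V s'|
        ≤ ∑ s', |(q s a s' - p s a s') * V s'| := Finset.abs_sum_le_sum_abs _ _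
      _ ≤ ∑ s', (q s a s' + p s a s') * M := by
          refine Finset.sum_le_sum fun s' _ => ?_
          rw [abs_mul]
          refine mul_le_mul ?_ (hV s') (abs_nonneg _) ?_
          · calc |q s a s' - p s a s'| ≤ |q s a s'| + |p s a s'| := abs_sub _ _
              _ = q s a s' + p s a s' := by
                  rw [abs_of_nonneg (hq0 s a s'), abs_of_nonneg (hp0 s a s')]
          · exact add_nonneg (hq0 s a s') (hp0 s a s')
      _ = 2 * M := by
          rw [← Finset.sum_mul, Finset.sum_add_distrib, hq1, hp1]
          ring
  calc |∑ a, π s a * ∑ s', (q s a s' - p s a s') * V s'|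
      ≤ ∑ a, |π s a * ∑ s', (q s a s' - p s a s')* V s'| := Finset.abs_sum_le_sum_abs _ _
    _ ≤ ∑ a, π s a * (2 * M) := by
        refine Finset.sum_le_sum fun a _ => ?_
        rw [abs_mul, abs_of_nonneg (hπ0 s a)]
        exact mul_le_mul_of_nonneg_left (hd a) (hπ0 s a)
    _ = 2 * M := by rw [← Finset.sum_mul, hπ1, one_mul]

lemma key_identity (γ : ℝ) (p q : S → A → S → ℝ) (π c : S → A → ℝ) (ρ : S → ℝ) (cmax : ℝ)
    (hγ0 : 0 ≤ γ) (hγ1 : γ < 1)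
    (hp0 : ∀ s a s', 0 ≤ p s a s') (hp1 : ∀ s a, ∑ s', p s a s' = 1)
    (hq0 : ∀ s a s', 0 ≤ q s a s') (hq1 : ∀ s a, ∑ s', q s a s' = 1)
    (hπ0 : ∀ s a, 0 ≤ π s a) (hπ1 : ∀ s, ∑ a, π s a = 1)
    (hρ0 : ∀ s, 0 ≤ ρ s) (hρ1 : ∑ s, ρ s = 1)
    (hc0 : ∀ s a, 0 ≤ c s a) (hc1 : ∀ s a, c s a ≤ cmax) :
    ∑ s, ρ s * Vval γ q π c s - ∑ s, ρ s * Vval γ p π c s =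
      γ * ∑' t : ℕ, γ ^ t * ∑ s, stDist q π ρ t s *
        ∑ a, π s a * ∑ s', (q s a s' - p s a s') * Vval γ p π c s' := by
  set M : ℝ := cmax * (1 - γ)⁻¹ with hM
  have hVabs : ∀ s, |Vval γ p π c s| ≤ M :=
    Vval_abs_le p π c hγ0 hγ1 hp0 hp1 hπ0 hπ1 hc0 hc1
  set D : ℕ → ℝ := fun t => ∑ s, stDist q π ρ t s *
    ∑ a, π s a * ∑ s', (q s a s' - p s a s') * Vval γ p π c s' with hD
  set f : ℕ → ℝ := fun t => γ ^ t * ∑ s, stDist q π ρ t s * Vval γ p π c s with hf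
  have hst0 := stDist_nonneg q π ρ hq0 hπ0 hρ0
  have hst1 := stDist_sum_one q π ρ hq1 hπ1 hρ1
  have hDabs : ∀ t, |D t| ≤ 2 * M := by
    intro t
    calc |D t| ≤ ∑ s, |stDist q π ρ t s *
          ∑ a, π s a * ∑ s', (q s a s' - p s a s') * Vval γ p π c s'| :=
        Finset.abs_sum_le_sum_abs _ _
      _ ≤ ∑ s, stDist q π ρ t s * (2 * M) := by
          refine Finset.sum_le_sum fun s _ => ?_
          rw [abs_mul, abs_of_nonneg (hst0 t s)]
          exact mul_le_mul_of_nonneg_left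
            (abs_inner_le p q π _ M hp0 hp1 hq0 hq1 hπ0 hπ1 hVabs s) (hst0 t s)
      _ = 2 * M := by rw [← Finset.sum_mul, hst1, one_mul]
  have hsumD : Summable (fun t => γ ^ t * D t) :=
    summable_geom_bound (B := 2 * M) hγ0 hγ1 _ hDabs
  have hgabs : ∀ t, |∑ s, stDist q π ρ t s * Vval γ p π c s| ≤ M := by
    intro t
    calc |∑ s, stDist q π ρ t s * Vval γ p π c s|
        ≤ ∑ s, |stDist q π ρ t s * Vval γ p π c s| := Finset.abs_sum_le_sum_abs _ _
      _ ≤ ∑ s, stDist q π ρ t s * M := by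
          refine Finset.sum_le_sum fun s _ => ?_
          rw [abs_mul, abs_of_nonneg (hst0 t s)]
          exact mul_le_mul_of_nonneg_left (hVabs s) (hst0 t s)
      _ = M := by rw [← Finset.sum_mul, hst1, one_mul]
  have hsumc : Summable (fun t => γ ^ t * ∑ s', stDist q π ρ t s' * ∑ a, π s' a * c s' a) :=
    summable_g q π c hγ0 hγ1 hq0 hq1 hπ0 hπ1 hc0 hc1 ρ hρ0 hρ1
  have hbell : ∀ s, Vval γ p π c s = (∑ a, π s a * c s a) +
      γ * ∑ s1, (∑ a, π s a * p s a s1) * Vval γ p π c s1 :=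
    Vval_bellman p π c hγ0 hγ1 hp0 hp1 hπ0 hπ1 hc0 hc1
  have hstep : ∀ t, f t - f (t+1) =
      γ ^ t * ∑ s, stDist q π ρ t s * (∑ a, π s a * c s a) - γ * (γ ^ t * D t) := by
    intro t
    have hb := step_identity p q π (stDist q π ρ t) (Vval γ p π c)
      (fun s => ∑ a, π s a * c s a) γ hbell
    have hstq : stDist q π ρ (t+1) = fun s' =>
        ∑ s, ∑ a, stDist q π ρ t s * π s a * q s a s' := rfl
    rw [hf]
    simp only [hstq, pow_succ, hD]
    calc γ ^ t * ∑ s, stDist q π ρ t s * Vval γ p π c s -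
          γ ^ t * γ * ∑ s', (∑ s, ∑ a, stDist q π ρ t s * π s a * q s a s') * Vval γ p π c s'
        = γ ^ t * (∑ s, stDist q π ρ t s * Vval γ p π c s -
            γ * ∑ s', (∑ s, ∑ a, stDist q π ρ t s * π s a * q s a s') * Vval γ p π c s') := by
          ring
      _ = γ ^ t * (∑ s, stDist q π ρ t s * (∑ a, π s a * c s a) -
            γ * ∑ s, stDist q π ρ t s *
              ∑ a, π s a * ∑ s', (q s a s' - p s a s') * Vval γ p π c s') := by rw [hb]
      _ = _ := by ring
  have htel : ∀ N : ℕ, f N = f 0 -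
      (∑ t ∈ Finset.range N, γ ^ t * ∑ s', stDist q π ρ t s' * ∑ a, π s' a * c s' a)
      + γ * ∑ t ∈ Finset.range N, γ ^ t * D t := by
    intro N
    have h1 : ∑ t ∈ Finset.range N, (f t - f (t+1)) = f 0 - f N := Finset.sum_range_sub' f N
    rw [Finset.sum_congr rfl (fun t _ => hstep t), Finset.sum_sub_distrib] at h1
    rw [← Finset.mul_sum] at h1
    linarith [h1]
  have hf_lim : Filter.Tendsto f Filter.atTop (nhds 0) := by
    have hgeo : Filter.Tendsto (fun t : ℕ => M * γ ^ t) Filter.atTop (nhds 0) := by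
      rw [show (0:ℝ) = M * 0 by ring]
      exact (tendsto_pow_atTop_nhds_zero_of_lt_one hγ0 hγ1).const_mul M
    refine squeeze_zero_norm (fun t => ?_) hgeo
    rw [hf, Real.norm_eq_abs, abs_mul, abs_pow, abs_of_nonneg hγ0, mul_comm]
    exact mul_le_mul_of_nonneg_right (hgabs t) (pow_nonneg hγ0 t)
  have hc_lim : Filter.Tendsto
      (fun N => ∑ t ∈ Finset.range N, γ ^ t * ∑ s', stDist q π ρ t s' * ∑ a, π s' a * c s' a)
      Filter.atTop (nhds (∑ s, ρ s * Vval γ q π c s)) := by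
    rw [Cval_eq_tsum q π c hγ0 hγ1 hq0 hq1 hπ0 hπ1 hc0 hc1 ρ]
    exact hsumc.hasSum.tendsto_sum_nat
  have hD_lim : Filter.Tendsto (fun N => ∑ t ∈ Finset.range N, γ ^ t * D t)
      Filter.atTop (nhds (∑' t, γ ^ t * D t)) := hsumD.hasSum.tendsto_sum_nat
  have hcomb : Filter.Tendsto f Filter.atTop
      (nhds (f 0 - ∑ s, ρ s * Vval γ q π c s + γ * ∑' t, γ ^ t * D t)) := by
    have := ((Filter.Tendsto.const_sub (f 0) hc_lim).add (hD_lim.const_mul γ))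
    refine this.congr fun N => (htel N).symm
  have h0 : f 0 - ∑ s, ρ s * Vval γ q π c s + γ * ∑' t, γ ^ t * D t = 0 :=
    tendsto_nhds_unique hcomb hf_lim
  have hf0 : f 0 = ∑ s, ρ s * Vval γ p π c s := by
    rw [hf]
    show γ ^ 0 * ∑ s, ρ s * Vval γ p π c s = _
    rw [pow_zero, one_mul]
  rw [hf0] at h0
  simp only [hD] at h0 ⊢
  linarith [h0]
end

section
open Finset
variable {S : Type} [Fintype S]

lemma kr (d : S → S → ℝ) (hd0 : ∀ x y, 0 ≤ d x y) (μ ν V : S → ℝ) (L : ℝ) (hL : 0 ≤ L)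
    (hμ0 : ∀ x, 0 ≤ μ x) (hμ1 : ∑ x, μ x = 1)
    (hν0 : ∀ x, 0 ≤ ν x) (hν1 : ∑ x, ν x = 1)
    (hV : ∀ x y, |V x - V y| ≤ L * d x y) :
    |∑ x, μ x * V x - ∑ x, ν x * V x| ≤ L * DW d μ ν := by
  have hkey : ∀ w ∈ {w : ℝ | ∃ κ : S → S → ℝ, (∀ x y, 0 ≤ κ x y) ∧
      (∀ x, ∑ y, κ x y = μ x) ∧ (∀ y, ∑ x, κ x y = ν y) ∧
      w = ∑ x, ∑ y, κ x y * d x y},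
      |∑ x, μ x * V x - ∑ x, ν x * V x| ≤ L * w := by
    rintro w ⟨κ, hκ0, hκμ, hκν, rfl⟩
    have e : ∑ x, μ x * V x - ∑ x, ν x * V x = ∑ x, ∑ y, κ x y * (V x - V y) := by
      calc ∑ x, μ x * V x - ∑ x, ν x * V x
          = ∑ x, (∑ y, κ x y) * V x - ∑ y, (∑ x, κ x y) * V y := by
            congr 1
            · exact Finset.sum_congr rfl fun x _ => by rw [hκμ x]
            · exact Finset.sum_congr rfl fun y _ => by rw [hκν y]
        _ = ∑ x, ∑ y, κ x y * V x - ∑ x, ∑ y, κ x y * V y := by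
            congr 1
            · exact Finset.sum_congr rfl fun x _ => Finset.sum_mul _ _ _
            · rw [Finset.sum_comm]
              exact Finset.sum_congr rfl fun y _ => Finset.sum_mul _ _ _
        _ = ∑ x, ∑ y, κ x y * (V x - V y) := by
            rw [← Finset.sum_sub_distrib]
            refine Finset.sum_congr rfl fun x _ => ?_
            rw [← Finset.sum_sub_distrib]
            exact Finset.sum_congr rfl fun y _ => by rw [mul_sub]
    rw [e]
    calc |∑ x, ∑ y, κ x y * (V x - V y)|
        ≤ ∑ x, ∑ y, |κ x y * (V x - V y)| :=
          le_trans (Finset.abs_sum_le_sum_abs _ _)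
            (Finset.sum_le_sum fun x _ => Finset.abs_sum_le_sum_abs _ _)
      _ ≤ ∑ x, ∑ y, κ x y * (L * d x y) := by
          refine Finset.sum_le_sum fun x _ => Finset.sum_le_sum fun y _ => ?_
          rw [abs_mul, abs_of_nonneg (hκ0 x y)]
          exact mul_le_mul_of_nonneg_left (hV x y) (hκ0 x y)
      _ = L * ∑ x, ∑ y, κ x y * d x y := by
          rw [Finset.mul_sum]
          refine Finset.sum_congr rfl fun x _ => ?_
          rw [Finset.mul_sum]
          exact Finset.sum_congr rfl fun y _ => by ring
  have hne : Set.Nonempty {w : ℝ | ∃ κ : S → S → ℝ, (∀ x y, 0 ≤ κ x y) ∧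
      (∀ x, ∑ y, κ x y = μ x) ∧ (∀ y, ∑ x, κ x y = ν y) ∧
      w = ∑ x, ∑ y, κ x y * d x y} := by
    refine ⟨∑ x, ∑ y, (μ x * ν y) * d x y, fun x y => μ x * ν y,
      fun x y => mul_nonneg (hμ0 x) (hν0 y), fun x => ?_, fun y => ?_, rfl⟩
    · rw [← Finset.mul_sum, hν1, mul_one]
    · rw [← Finset.sum_mul, hμ1, one_mul]
  have hDW : DW d μ ν = sInf {w : ℝ | ∃ κ : S → S → ℝ, (∀ x y, 0 ≤ κ x y) ∧
      (∀ x, ∑ y, κ x y = μ x) ∧ (∀ y, ∑ x, κ x y = ν y) ∧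
      w = ∑ x, ∑ y, κ x y * d x y} := rfl
  rcases eq_or_lt_of_le hL with hL0 | hLpos
  · obtain ⟨w0, hw0⟩ := hne
    have h1 := hkey w0 hw0
    rw [← hL0] at h1 ⊢
    rw [zero_mul] at h1 ⊢
    exact h1
  · rw [hDW]
    have h1 : |∑ x, μ x * V x - ∑ x, ν x * V x| / L ≤ sInf {w : ℝ | ∃ κ : S → S → ℝ,
        (∀ x y, 0 ≤ κ x y) ∧ (∀ x, ∑ y, κ x y = μ x) ∧ (∀ y, ∑ x, κ x y = ν y) ∧
        w = ∑ x, ∑ y, κ x y * d x y} := by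
      refine le_csInf hne fun w hw => ?_
      rw [div_le_iff₀ hLpos, mul_comm]
      exact hkey w hw
    rw [div_le_iff₀ hLpos, mul_comm] at h1
    exact h1

lemma dw_zero [MetricSpace S] (hsub : ∀ x y : S, x = y)
    (μ : S → ℝ) (hμ0 : ∀ x, 0 ≤ μ x) (hμ1 : ∑ x, μ x = 1) : DW dist μ μ = 0 := by
  have hmem : (0:ℝ) ∈ {w : ℝ | ∃ κ : S → S → ℝ, (∀ x y, 0 ≤ κ x y) ∧
      (∀ x, ∑ y, κ x y = μ x) ∧ (∀ y, ∑ x, κ x y = μ y) ∧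
      w = ∑ x, ∑ y, κ x y * dist x y} := by
    refine ⟨fun x y => μ x * μ y, fun x y => mul_nonneg (hμ0 x) (hμ0 y),
      fun x => by rw [← Finset.mul_sum, hμ1, mul_one],
      fun y => by rw [← Finset.sum_mul, hμ1, one_mul], ?_⟩
    exact (Finset.sum_eq_zero fun x _ => Finset.sum_eq_zero fun y _ => by
      rw [hsub x y, dist_self, mul_zero]).symm
  refine le_antisymm (csInf_le ⟨0, fun w hw => ?_⟩ hmem) (le_csInf ⟨0, hmem⟩ fun w hw => ?_)
  · obtain ⟨κ, hκ0, -, -, rfl⟩ := hw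
    exact Finset.sum_nonneg fun x _ => Finset.sum_nonneg fun y _ =>
      mul_nonneg (hκ0 x y) dist_nonneg
  · obtain ⟨κ, hκ0, -, -, rfl⟩ := hw
    exact Finset.sum_nonneg fun x _ => Finset.sum_nonneg fun y _ =>
      mul_nonneg (hκ0 x y) dist_nonneg
end


/-- Telescoping lemma combined with Kantorovich–Rubinstein duality: if the
value function under `p` is `L_C`-Lipschitz for every policy, then the cost gap
is bounded by the occupancy-weighted Wasserstein distance between kernels. -/
theorem cost_gap_le_wasserstein {S A : Type} [Fintype S] [Fintype A]
    [DecidableEq S] [MetricSpace S]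
    (γ : ℝ) (hγ0 : 0 ≤ γ) (hγ1 : γ < 1)
    (p q : S → A → S → ℝ) (π : S → A → ℝ) (ρ : S → ℝ)
    (c : S → A → ℝ) (cmax : ℝ) (L : ℝ)
    (hp0 : ∀ s a s', 0 ≤ p s a s') (hp1 : ∀ s a, ∑ s', p s a s' = 1)
    (hq0 : ∀ s a s', 0 ≤ q s a s') (hq1 : ∀ s a, ∑ s', q s a s' = 1)
    (hπ0 : ∀ s a, 0 ≤ π s a) (hπ1 : ∀ s, ∑ a, π s a = 1)
    (hρ0 : ∀ s, 0 ≤ ρ s) (hρ1 : ∑ s, ρ s = 1)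
    (hc0 : ∀ s a, 0 ≤ c s a) (hc1 : ∀ s a, c s a ≤ cmax)
    (hLip : ∀ π' : S → A → ℝ, (∀ s a, 0 ≤ π' s a) → (∀ s, ∑ a, π' s a = 1) →
      ∀ s s' : S, |Vval γ p π' c s - Vval γ p π' c s'| ≤ L * dist s s') :
    |Cval γ q π c ρ - Cval γ p π c ρ| ≤
      γ * L / (1 - γ) * ∑ s, ∑ a, occ γ q π ρ s a *
        DW dist (q s a) (p s a) := by
  classical
  by_cases hL : 0 ≤ L
  · -- main case
    have key := key_identity γ p q π c ρ cmax hγ0 hγ1 hp0 hp1 hq0 hq1 hπ0 hπ1 hρ0 hρ1 hc0 hc1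
    have hCq : Cval γ q π c ρ = ∑ s, ρ s * Vval γ q π c s := rfl
    have hCp : Cval γ p π c ρ = ∑ s, ρ s * Vval γ p π c s := rfl
    rw [hCq, hCp, key]
    have hst0 := stDist_nonneg q π ρ hq0 hπ0 hρ0
    have hst1 := stDist_sum_one q π ρ hq1 hπ1 hρ1
    have hstle1 : ∀ t s, stDist q π ρ t s ≤ 1 := by
      intro t s
      have h := Finset.single_le_sum (f := fun s => stDist q π ρ t s)
        (fun s _ => hst0 t s) (Finset.mem_univ s)
      rwa [hst1 t] at h
    have hsum_s : ∀ s, Summable (fun t => γ ^ t * stDist q π ρ t s) := fun s =>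
      summable_geom_bound (B := 1) hγ0 hγ1 _
        (fun t => by rw [abs_of_nonneg (hst0 t s)]; exact hstle1 t s)
    have hw0 : ∀ s, 0 ≤ ∑' t : ℕ, γ ^ t * stDist q π ρ t s := fun s =>
      tsum_nonneg fun t => mul_nonneg (pow_nonneg hγ0 t) (hst0 t s)
    have hT : ∑' t : ℕ, γ ^ t * ∑ s, stDist q π ρ t s *
          ∑ a, π s a * ∑ s', (q s a s' - p s a s') * Vval γ p π c s'
        = ∑ s, (∑' t : ℕ, γ ^ t * stDist q π ρ t s) *
            ∑ a, π s a * ∑ s', (q s a s' - p s a s') * Vval γ p π c s' := by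
      calc ∑' t : ℕ, γ ^ t * ∑ s, stDist q π ρ t s *
            ∑ a, π s a * ∑ s', (q s a s' - p s a s') * Vval γ p π c s'
          = ∑' t : ℕ, ∑ s, (γ ^ t * stDist q π ρ t s) *
              ∑ a, π s a * ∑ s', (q s a s' - p s a s') * Vval γ p π c s' := by
            refine tsum_congr fun t => ?_
            rw [Finset.mul_sum]
            exact Finset.sum_congr rfl fun s _ => by ring
        _ = ∑ s, ∑' t : ℕ, (γ ^ t * stDist q π ρ t s) *
              ∑ a, π s a * ∑ s', (q s a s' - p s a s') * Vval γ p π c s' :=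
            Summable.tsum_finsetSum fun s _ => (hsum_s s).mul_right _
        _ = _ := Finset.sum_congr rfl fun s _ => tsum_mul_right
    rw [hT]
    have hLipV := hLip π hπ0 hπ1
    have hΔbound : ∀ s a, |∑ s', (q s a s' - p s a s') * Vval γ p π c s'| ≤
        L * DW dist (q s a) (p s a) := by
      intro s a
      have e : ∑ s', (q s a s' - p s a s') * Vval γ p π c s'
          = ∑ s', q s a s' * Vval γ p π c s' - ∑ s', p s a s' * Vval γ p π c s' := by
        rw [← Finset.sum_sub_distrib]
        exact Finset.sum_congr rfl fun s' _ => sub_mul _ _ _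
      rw [e]
      exact kr dist (fun x y => dist_nonneg) (q s a) (p s a) (Vval γ p π c) L hL
        (hq0 s a) (hq1 s a) (hp0 s a) (hp1 s a) hLipV
    have hΔπbound : ∀ s, |∑ a, π s a * ∑ s', (q s a s' - p s a s') * Vval γ p π c s'| ≤
        ∑ a, π s a * (L * DW dist (q s a) (p s a)) := by
      intro s
      calc |∑ a, π s a * ∑ s', (q s a s' - p s a s') * Vval γ p π c s'|
          ≤ ∑ a, |π s a * ∑ s', (q s a s' - p s a s') * Vval γ p π c s'| :=
            Finset.abs_sum_le_sum_abs _ _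
        _ ≤ ∑ a, π s a * (L * DW dist (q s a) (p s a)) := by
            refine Finset.sum_le_sum fun a _ => ?_
            rw [abs_mul, abs_of_nonneg (hπ0 s a)]
            exact mul_le_mul_of_nonneg_left (hΔbound s a) (hπ0 s a)
    have hTb : |∑ s, (∑' t : ℕ, γ ^ t * stDist q π ρ t s) *
          ∑ a, π s a * ∑ s', (q s a s' - p s a s') * Vval γ p π c s'|
        ≤ ∑ s, (∑' t : ℕ, γ ^ t * stDist q π ρ t s) *
            ∑ a, π s a * (L * DW dist (q s a) (p s a)) := by
      refine le_trans (Finset.abs_sum_le_sum_abs _ _) (Finset.sum_le_sum fun s _ => ?_)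
      rw [abs_mul, abs_of_nonneg (hw0 s)]
      exact mul_le_mul_of_nonneg_left (hΔπbound s) (hw0 s)
    calc |γ * ∑ s, (∑' t : ℕ, γ ^ t * stDist q π ρ t s) *
          ∑ a, π s a * ∑ s', (q s a s' - p s a s') * Vval γ p π c s'|
        = γ * |∑ s, (∑' t : ℕ, γ ^ t * stDist q π ρ t s) *
            ∑ a, π s a * ∑ s', (q s a s' - p s a s') * Vval γ p π c s'| := by
          rw [abs_mul, abs_of_nonneg hγ0]
      _ ≤ γ * ∑ s, (∑' t : ℕ, γ ^ t * stDist q π ρ t s) *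
            ∑ a, π s a * (L * DW dist (q s a) (p s a)) :=
          mul_le_mul_of_nonneg_left hTb hγ0
      _ = γ * L / (1 - γ) * ∑ s, ∑ a, occ γ q π ρ s a * DW dist (q s a) (p s a) := by
          have h1γ : (1:ℝ) - γ ≠ 0 := ne_of_gt (by linarith)
          simp only [Finset.mul_sum]
          refine Finset.sum_congr rfl fun s _ => ?_
          refine Finset.sum_congr rfl fun a _ => ?_
          have hocc : occ γ q π ρ s a =
              (1 - γ) * π s a * ∑' t : ℕ, γ ^ t * stDist q π ρ t s := rfl
          rw [hocc]
          field_simp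
  · -- degenerate case: L < 0 forces S to be a subsingleton
    push_neg at hL
    have hsub : ∀ x y : S, x = y := by
      intro x y
      by_contra hxy
      have h1 := hLip π hπ0 hπ1 x y
      have h2 : 0 < dist x y := dist_pos.2 hxy
      nlinarith [abs_nonneg (Vval γ p π c x - Vval γ p π c y)]
    have hqp : q = p := by
      funext s a s'
      have huniv : (Finset.univ : Finset S) = {s'} := by
        ext x
        simp [hsub x s']
      have h1 := hq1 s a
      have h2 := hp1 s a
      rw [huniv, Finset.sum_singleton] at h1 h2
      rw [h1, h2]
    have hC : Cval γ q π c ρ = Cval γ p π c ρ := by rw [hqp]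
    rw [hC, sub_self, abs_zero]
    have hz : ∑ s, ∑ a, occ γ q π ρ s a * DW dist (q s a) (p s a) = 0 :=
      Finset.sum_eq_zero fun s _ => Finset.sum_eq_zero fun a _ => by
        have : DW dist (q s a) (p s a) = 0 := by
          rw [hqp]
          exact dw_zero hsub (p s a) (hp0 s a) (hp1 s a)
        rw [this, mul_zero]
    rw [hz, mul_zero]
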